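/- Clearing/killing correctness: if (i, j) is a persistence pair of a boundary matrix M, then in any reduced form R of M, column R_i is zero. Hence setting column i to zero as soon as i appears as a lowest one of a reduced column does not change the output of the reduction. -/

import Mathlib

/-- Left-to-right column addition over ℤ/2: add column `i` to column `j`. -/
def colAdd {n : ℕ} (M : Matrix (Fin n) (Fin n) (ZMod 2)) (i j : Fin n) :
    Matrix (Fin n) (Fin n) (ZMod 2) :=
  fun r c => if c = j then M r j + M r i else M r c

/-- One step of left-to-right column reduction: add some column `i` to a
later column `j`. -/
def Step {n : ℕ} (M N : Matrix (Fin n) (Fin n) (ZMod 2)) : Prop :=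
  ∃ i j : Fin n, i < j ∧ N = colAdd M i j

/-- `R` is obtained from `M` by a finite sequence of left-to-right column
additions. -/
def Reduces {n : ℕ} (M R : Matrix (Fin n) (Fin n) (ZMod 2)) : Prop :=
  Relation.ReflTransGen Step M R

/-- `i` is the lowest one (largest row index of a nonzero entry) of
column `j` of `R`. -/
def IsLow {n : ℕ} (R : Matrix (Fin n) (Fin n) (ZMod 2)) (i j : Fin n) : Prop :=
  R i j ≠ 0 ∧ ∀ r, R r j ≠ 0 → r ≤ i

/-- A matrix is reduced if distinct nonzero columns have distinct lowest ones. -/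
def Reduced {n : ℕ} (R : Matrix (Fin n) (Fin n) (ZMod 2)) : Prop :=
  ∀ i j j', IsLow R i j → IsLow R i j' → j = j'

/-- The ℤ/2 boundary matrix of a sequence of simplices `σ`:
entry (i,j) is 1 iff `σ i` is a codimension-1 face of `σ j`. -/
def bmat {V : Type} [DecidableEq V] {n : ℕ} (σ : Fin n → Finset V) :
    Matrix (Fin n) (Fin n) (ZMod 2) :=
  fun i j => if σ i ⊆ σ j ∧ (σ i).card + 1 = (σ j).card then 1 else 0



section Aux
open Finset Matrix

variable {n : ℕ}

lemma colAdd_involutive (M : Matrix (Fin n) (Fin n) (ZMod 2)) (i j : Fin n) (hij : i ≠ j) :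
    colAdd (colAdd M i j) i j = M := by
  funext r c
  simp only [colAdd]
  by_cases h : c = j
  · subst h
    simp only [if_pos rfl, if_neg hij, if_true]
    rw [add_assoc, CharTwo.add_self_eq_zero, add_zero]
  · simp [h]

lemma step_symm {M N : Matrix (Fin n) (Fin n) (ZMod 2)} (h : Step M N) : Step N M := by
  obtain ⟨i, j, hij, rfl⟩ := h
  exact ⟨i, j, hij, (colAdd_involutive M i j (ne_of_lt hij)).symm⟩

lemma reduces_symm {M N : Matrix (Fin n) (Fin n) (ZMod 2)} (h : Reduces M N) : Reduces N M := by
  induction h with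
  | refl => exact Relation.ReflTransGen.refl
  | tail _ hstep ih => exact Relation.ReflTransGen.head (step_symm hstep) ih

def UniUp (U : Matrix (Fin n) (Fin n) (ZMod 2)) : Prop :=
  (∀ k : Fin n, U k k = 1) ∧ ∀ r c : Fin n, c < r → U r c = 0

lemma colAdd_eq_mul (M : Matrix (Fin n) (Fin n) (ZMod 2)) (i j : Fin n) :
    colAdd M i j = M * (1 + Matrix.single i j 1) := by
  funext r c
  simp only [colAdd, Matrix.mul_apply, Matrix.add_apply, Matrix.one_apply,
    Matrix.single, Matrix.of_apply, mul_add]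
  rw [Finset.sum_add_distrib]
  by_cases h : c = j
  · subst h
    simp [Finset.sum_ite_eq', eq_comm, add_comm]
  · have hjc : j ≠ c := fun hh => h hh.symm
    simp [h, hjc]

lemma uniUp_mul_elem {U : Matrix (Fin n) (Fin n) (ZMod 2)} (hU : UniUp U)
    {i j : Fin n} (hij : i < j) : UniUp (U * (1 + Matrix.single i j 1)) := by
  have key : ∀ r c : Fin n, ((U * (1 + Matrix.single i j 1) : Matrix (Fin n) (Fin n) (ZMod 2))) r c
      = U r c + if c = j then U r i else 0 := by
    intro r c
    simp only [Matrix.mul_apply, Matrix.add_apply, Matrix.one_apply,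
      Matrix.single, Matrix.of_apply, mul_add]
    rw [Finset.sum_add_distrib]
    by_cases h : c = j
    · subst h; simp [Finset.sum_ite_eq', eq_comm]
    · have hjc : j ≠ c := fun hh => h hh.symm
      simp [h, hjc]
  constructor
  · intro k
    rw [key]
    by_cases h : k = j
    · subst h
      rw [if_pos rfl, hU.1, hU.2 _ _ hij, add_zero]
    · rw [if_neg h, hU.1, add_zero]
  · intro r c hcr
    rw [key, hU.2 r c hcr]
    by_cases h : c = j
    · subst h
      rw [if_pos rfl, hU.2 r i (lt_trans hij hcr), zero_add]
    · rw [if_neg h, add_zero]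

lemma reduces_factor {M R : Matrix (Fin n) (Fin n) (ZMod 2)} (h : Reduces M R) :
    ∃ U, UniUp U ∧ R = M * U := by
  induction h with
  | refl => exact ⟨1, ⟨fun k => Matrix.one_apply_eq k,
      fun r c hcr => Matrix.one_apply_ne (ne_of_gt hcr)⟩, (Matrix.mul_one M).symm⟩
  | tail _ hstep ih =>
    obtain ⟨U, hU, rfl⟩ := ih
    obtain ⟨a, b, hab, rfl⟩ := hstep
    refine ⟨U * (1 + Matrix.single a b 1), uniUp_mul_elem hU hab, ?_⟩
    rw [colAdd_eq_mul, Matrix.mul_assoc]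

end Aux


section MM
open Finset Matrix

lemma bmat_mul_bmat {V : Type} [DecidableEq V] {n : ℕ} (σ : Fin n → Finset V)
    (hinj : Function.Injective σ)
    (hfilt : ∀ j : Fin n, ∀ t ⊆ σ j, t.Nonempty → ∃ i ≤ j, σ i = t) :
    bmat σ * bmat σ = 0 := by
  funext r c
  simp only [Matrix.mul_apply, bmat, Matrix.zero_apply]
  have hterm : ∀ k : Fin n,
      (if σ r ⊆ σ k ∧ (σ r).card + 1 = (σ k).card then (1 : ZMod 2) else 0) *
      (if σ k ⊆ σ c ∧ (σ k).card + 1 = (σ c).card then (1 : ZMod 2) else 0)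
      = if (σ r ⊆ σ k ∧ (σ r).card + 1 = (σ k).card) ∧
          (σ k ⊆ σ c ∧ (σ k).card + 1 = (σ c).card) then 1 else 0 := by
    intro k
    by_cases h1 : σ r ⊆ σ k ∧ (σ r).card + 1 = (σ k).card <;>
      by_cases h2 : σ k ⊆ σ c ∧ (σ k).card + 1 = (σ c).card <;>
      simp [h1, h2]
  rw [Finset.sum_congr rfl fun k _ => hterm k, Finset.sum_boole]
  set S := Finset.univ.filter (fun k : Fin n =>
    (σ r ⊆ σ k ∧ (σ r).card + 1 = (σ k).card) ∧
    (σ k ⊆ σ c ∧ (σ k).card + 1 = (σ c).card)) with hS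
  rcases S.eq_empty_or_nonempty with hE | ⟨k0, hk0⟩
  · rw [hE]; simp
  · rw [hS, Finset.mem_filter] at hk0
    obtain ⟨-, ⟨hrk, hck⟩, ⟨hkc, hcc⟩⟩ := hk0
    have hrc : σ r ⊆ σ c := hrk.trans hkc
    have hcard : (σ r).card + 2 = (σ c).card := by omega
    have hins : ∀ x ∈ σ c \ σ r, insert x (σ r) ⊆ σ c := by
      intro x hx
      rw [Finset.mem_sdiff] at hx
      exact Finset.insert_subset hx.1 hrc
    have key : ∀ x (hx : x ∈ σ c \ σ r), ∃ k : Fin n, σ k = insert x (σ r) := by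
      intro x hx
      obtain ⟨k, -, hk⟩ := hfilt c _ (hins x hx) (Finset.insert_nonempty _ _)
      exact ⟨k, hk⟩
    have hbij : (σ c \ σ r).card = S.card := by
      apply Finset.card_bij (fun x hx => (key x hx).choose)
      · intro x hx
        have hspec := (key x hx).choose_spec
        have hx' := Finset.mem_sdiff.mp hx
        rw [hS, Finset.mem_filter, hspec]
        have hcardins : (insert x (σ r)).card = (σ r).card + 1 :=
          Finset.card_insert_of_notMem hx'.2
        refine ⟨Finset.mem_univ _, ⟨Finset.subset_insert _ _, hcardins.symm⟩,
          hins x hx, by omega⟩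
      · intro x hx y hy hxy
        have hspx := (key x hx).choose_spec
        have hspy := (key y hy).choose_spec
        rw [hxy, hspy] at hspx
        have hx' := Finset.mem_sdiff.mp hx
        have : x ∈ insert y (σ r) := by
          rw [hspx]; exact Finset.mem_insert_self _ _
        rcases Finset.mem_insert.mp this with h | h
        · exact h
        · exact absurd h hx'.2
      · intro k hk
        rw [hS, Finset.mem_filter] at hk
        obtain ⟨-, ⟨hrk', hck'⟩, ⟨hkc', -⟩⟩ := hk
        have hsd : (σ k \ σ r).Nonempty := by
          rw [← Finset.card_pos, Finset.card_sdiff_of_subset hrk']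
          omega
        obtain ⟨x, hxk⟩ := hsd
        have hx' := Finset.mem_sdiff.mp hxk
        have hxc : x ∈ σ c \ σ r := Finset.mem_sdiff.mpr ⟨hkc' hx'.1, hx'.2⟩
        refine ⟨x, hxc, ?_⟩
        apply hinj
        rw [(key x hxc).choose_spec]
        apply Finset.eq_of_subset_of_card_le (Finset.insert_subset hx'.1 hrk')
        rw [Finset.card_insert_of_notMem hx'.2]
        omega
    have h2 : S.card = 2 := by
      rw [← hbij, Finset.card_sdiff_of_subset hrc]
      omega
    rw [h2]
    decide

end MM

/-- (i, j) is a persistence pair of `M`. -/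
def PersPair {n : ℕ} (M : Matrix (Fin n) (Fin n) (ZMod 2)) (i j : Fin n) : Prop :=
  ∃ R, Reduces M R ∧ Reduced R ∧ IsLow R i j

/-- clearing/killing correctness.  If (i, j) is a persistence
pair of the boundary matrix `M` of a simplicial filtration, then in any reduced
form `R'` of `M` the column `i` is zero.  Hence setting column `i` to zero as
soon as `i` appears as a lowest one does not change the output of the
reduction. -/

theorem clearing_correct
    {V : Type} [DecidableEq V] {n : ℕ} (σ : Fin n → Finset V)
    (hinj : Function.Injective σ)
    (hne : ∀ i, (σ i).Nonempty)
    (hfilt : ∀ j : Fin n, ∀ t ⊆ σ j, t.Nonempty → ∃ i ≤ j, σ i = t)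
    (i j : Fin n) (hpair : PersPair (bmat σ) i j)
    (R' : Matrix (Fin n) (Fin n) (ZMod 2))
    (hred : Reduces (bmat σ) R') (hR' : Reduced R') :
    ∀ r, R' r i = 0 := by
  classical
  obtain ⟨R, hRred, hRreduced, hlow⟩ := hpair
  set M := bmat σ with hM
  have hMM : M * M = 0 := bmat_mul_bmat σ hinj hfilt
  -- v is column j of R, it is a cycle supported on rows ≤ i with v i ≠ 0
  obtain ⟨U, hU, rfl⟩ := reduces_factor hRred
  set v : Fin n → ZMod 2 := fun k => (M * U) k j with hv
  have hvcyc : ∀ r, ∑ k, M r k * v k = 0 := by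
    intro r
    have h0 : M * (M * U) = 0 := by rw [← Matrix.mul_assoc, hMM, Matrix.zero_mul]
    have := congrFun (congrFun h0 r) j
    simpa [Matrix.mul_apply, hv] using this
  have hvi : v i ≠ 0 := hlow.1
  have hvsupp : ∀ k, i < k → v k = 0 := by
    intro k hk
    by_contra hvk
    exact absurd (hlow.2 k hvk) (not_le.mpr hk)
  -- transport v to coordinates of R'
  obtain ⟨W, hW, hMW⟩ := reduces_factor (reduces_symm hred)
  set w : Fin n → ZMod 2 := fun c => ∑ k, W c k * v k with hw
  have hwcyc : ∀ r, ∑ c, R' r c * w c = 0 := by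
    intro r
    have : ∑ c, R' r c * w c = ∑ k, (R' * W) r k * v k := by
      simp only [hw, Finset.mul_sum, Matrix.mul_apply, Finset.sum_mul]
      rw [Finset.sum_comm]
      congr 1; funext k; congr 1; funext c; ring
    rw [this, ← hMW]
    exact hvcyc r
  have hwi : w i ≠ 0 := by
    have : w i = v i := by
      show (∑ k, W i k * v k) = v i
      rw [Finset.sum_eq_single i]
      · rw [hW.1, one_mul]
      · intro k _ hk
        rcases lt_or_gt_of_ne hk with h | h
        · rw [hW.2 i k h, zero_mul]
        · rw [hvsupp k h, mul_zero]
      · intro h; exact absurd (Finset.mem_univ i) h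
    rw [this]; exact hvi
  -- set of relevant nonzero columns of R'
  intro r
  by_contra hri
  set S : Finset (Fin n) :=
    Finset.univ.filter (fun c => w c ≠ 0 ∧ ∃ r', R' r' c ≠ 0) with hSdef
  have hiS : i ∈ S := by
    rw [hSdef, Finset.mem_filter]
    exact ⟨Finset.mem_univ _, hwi, r, hri⟩
  have lowex : ∀ c : Fin n, (∃ r', R' r' c ≠ 0) → ∃ l, IsLow R' l c := by
    rintro c ⟨r0, hr0⟩
    set T := Finset.univ.filter (fun r' => R' r' c ≠ 0) with hT
    have hTne : T.Nonempty := ⟨r0, by simp [hT, hr0]⟩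
    refine ⟨T.max' hTne, ?_, ?_⟩
    · exact (Finset.mem_filter.mp (T.max'_mem hTne)).2
    · intro r' hr'
      exact T.le_max' r' (by simp [hT, hr'])
  set L : Fin n → Fin n :=
    fun c => if h : ∃ l, IsLow R' l c then h.choose else i with hL
  have hLspec : ∀ c ∈ S, IsLow R' (L c) c := by
    intro c hc
    rw [hSdef, Finset.mem_filter] at hc
    have hex := lowex c hc.2.2
    rw [hL]
    simp only [dif_pos hex]
    exact hex.choose_spec
  obtain ⟨c0, hc0S, hc0max⟩ := Finset.exists_max_image S L ⟨i, hiS⟩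
  have hsum := hwcyc (L c0)
  rw [Finset.sum_eq_single c0] at hsum
  · have h1 : R' (L c0) c0 ≠ 0 := (hLspec c0 hc0S).1
    have h2 : w c0 ≠ 0 := by
      have := hc0S
      rw [hSdef, Finset.mem_filter] at this
      exact this.2.1
    exact mul_ne_zero h1 h2 hsum
  · intro c _ hcc0
    by_cases hwc : w c = 0
    · rw [hwc, mul_zero]
    by_cases hcol : ∃ r', R' r' c ≠ 0
    · have hcS : c ∈ S := by
        rw [hSdef, Finset.mem_filter]
        exact ⟨Finset.mem_univ _, hwc, hcol⟩
      by_cases hz : R' (L c0) c = 0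
      · rw [hz, zero_mul]
      · exfalso
        have hle : L c0 ≤ L c := (hLspec c hcS).2 _ hz
        have hge : L c ≤ L c0 := hc0max c hcS
        have heq : L c = L c0 := le_antisymm hge hle
        have : c = c0 := hR' (L c0) c c0 (heq ▸ hLspec c hcS) (hLspec c0 hc0S)
        exact hcc0 this
    · push_neg at hcol
      rw [hcol (L c0), zero_mul]
  · intro h; exact absurd (Finset.mem_univ c0) h
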